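/- (PBW / triangular decomposition of the rational Cherednik algebra of type ℤ/lℤ, Proposition 12(1): H_κ ≅ ℂ[z] ⊗ ℂ[ℤ/lℤ] ⊗ ℂ[∂_κ] as ℂ-vector spaces.) The family of operators {Z^a ∘ Γ^b ∘ ∂_κ^c : a, c ∈ ℤ_{≥0}, 0 ≤ b ≤ l−1} is a basis of H_κ as a ℂ-vector space (it is ℂ-linearly independent in End_ℂ(L) and spans H_κ). -/

import Mathlib

open LaurentPolynomial

noncomputable section

/-- The ℂ-algebra `L = ℂ[z, z⁻¹]` of Laurent polynomials (`T n` is the monomial `zⁿ`). -/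
abbrev Lau : Type := LaurentPolynomial ℂ

/-- Multiplication by `z`, as a ℂ-linear endomorphism of `L`. -/
def Zmul : Module.End ℂ Lau := LinearMap.mulLeft ℂ (T 1)

/-- Multiplication by `z⁻¹`, as a ℂ-linear endomorphism of `L`. -/
def Zinv : Module.End ℂ Lau := LinearMap.mulLeft ℂ (T (-1))

/-- The ℂ-algebra automorphism `Γ` of `L` determined by `Γ(z) = ζ⁻¹ z`,
i.e. `Γ(zⁿ) = ζ⁻ⁿ zⁿ`. -/
def Gam (ζ : ℂ) : Module.End ℂ Lau :=
  (Finsupp.lsum ℂ fun n : ℤ => LinearMap.toSpanSingleton ℂ Lau ((ζ⁻¹ ^ n) • T n)) ∘ₗ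
    (AddMonoidAlgebra.coeffLinearEquiv ℂ).toLinearMap

/-- The formal derivative `d/dz : zⁿ ↦ n zⁿ⁻¹` on `L`. -/
def Deriv : Module.End ℂ Lau :=
  (Finsupp.lsum ℂ fun n : ℤ => LinearMap.toSpanSingleton ℂ Lau ((n : ℂ) • T (n - 1))) ∘ₗ
    (AddMonoidAlgebra.coeffLinearEquiv ℂ).toLinearMap

/-- The idempotent `e_i = (1/l)·Σ_{j=0}^{l−1} ζ^{ij} Γ^j` of `ℂ(ℤ/lℤ)`, regarded as an
endomorphism of `L`. -/
def eIdem (l : ℕ) (ζ : ℂ) (i : Fin l) : Module.End ℂ Lau :=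
  (l : ℂ)⁻¹ • ∑ j ∈ Finset.range l, (ζ ^ ((i : ℕ) * j)) • (Gam ζ) ^ j

/-- The Dunkl operator `∂_κ = d/dz + l z⁻¹ Σ_{i=0}^{l−1} κ_i e_i` (where `κ_0 = 0`). -/
def Dunkl (l : ℕ) (ζ : ℂ) (κ : Fin l → ℂ) : Module.End ℂ Lau :=
  Deriv + (l : ℂ) • (Zinv * ∑ i : Fin l, κ i • eIdem l ζ i)

/-- The rational Cherednik algebra `H_κ` of type `ℤ/lℤ`: the unital ℂ-subalgebra of
`End_ℂ(L)` generated by `Z`, `Γ` and `∂_κ`. -/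
def Cher (l : ℕ) (ζ : ℂ) (κ : Fin l → ℂ) : Subalgebra ℂ (Module.End ℂ Lau) :=
  Algebra.adjoin ℂ {Zmul, Gam ζ, Dunkl l ζ κ}

/-! ### Auxiliary material -/

namespace PBWAux

lemma T_def' (n : ℤ) : (T n : Lau) = AddMonoidAlgebra.single n 1 := rfl

lemma coeff_T' (n : ℤ) : (AddMonoidAlgebra.coeffLinearEquiv ℂ) (T n : Lau) = Finsupp.single n 1 := rfl

lemma endExt {f g : Module.End ℂ Lau} (h : ∀ n : ℤ, f (T n) = g (T n)) : f = g := by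
  have hc : f ∘ₗ (AddMonoidAlgebra.coeffLinearEquiv ℂ).symm.toLinearMap
      = g ∘ₗ (AddMonoidAlgebra.coeffLinearEquiv ℂ).symm.toLinearMap := by
    apply Finsupp.lhom_ext
    intro a b
    have hb : ((AddMonoidAlgebra.coeffLinearEquiv ℂ).symm (Finsupp.single a b) : Lau) = b • T a := by
      rw [T_def', AddMonoidAlgebra.smul_single, smul_eq_mul, mul_one]; rfl
    rw [LinearMap.comp_apply, LinearMap.comp_apply, LinearEquiv.coe_coe, hb, map_smul, map_smul]
    exact congrArg _ (h a)
  apply LinearMap.ext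
  intro x
  have := LinearMap.congr_fun hc (AddMonoidAlgebra.coeffLinearEquiv ℂ x)
  simpa using this

lemma Zmul_T (n : ℤ) : Zmul (T n) = T (n + 1) := by
  rw [Zmul, LinearMap.mulLeft_apply, ← T_add, add_comm]

lemma Gam_T (ζ : ℂ) (n : ℤ) : Gam ζ (T n) = (ζ⁻¹ ^ n) • T n := by
  rw [Gam, LinearMap.comp_apply, LinearEquiv.coe_coe, coeff_T', Finsupp.lsum_single,
    LinearMap.toSpanSingleton_apply, one_smul]

lemma Deriv_T (n : ℤ) : Deriv (T n) = (n : ℂ) • T (n - 1) := by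
  rw [Deriv, LinearMap.comp_apply, LinearEquiv.coe_coe, coeff_T', Finsupp.lsum_single,
    LinearMap.toSpanSingleton_apply, one_smul]

lemma Zinv_T (n : ℤ) : Zinv (T n) = T (n - 1) := by
  rw [Zinv, LinearMap.mulLeft_apply, ← T_add]
  ring_nf

lemma Gam_pow_T (ζ : ℂ) (b : ℕ) (n : ℤ) : ((Gam ζ) ^ b) (T n) = ((ζ⁻¹ ^ n) ^ b) • T n := by
  induction b with
  | zero => simp
  | succ b ih =>
    rw [pow_succ, Module.End.mul_apply, Gam_T, map_smul, ih, smul_smul, pow_succ]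
    ring_nf

lemma Zmul_pow_T (a : ℕ) (n : ℤ) : (Zmul ^ a) (T n) = T (n + a) := by
  induction a with
  | zero => simp
  | succ a ih =>
    rw [pow_succ', Module.End.mul_apply, ih, Zmul_T]
    congr 1; push_cast; ring

section
variable {l : ℕ} [NeZero l] {ζ : ℂ} (hζ : IsPrimitiveRoot ζ l)

def res (l : ℕ) [NeZero l] (n : ℤ) : Fin l := ⟨(n : ZMod l).val, ZMod.val_lt _⟩

lemma res_eq_iff (n : ℤ) (i : Fin l) : res l n = i ↔ (n : ZMod l) = ((i : ℕ) : ZMod l) := by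
  constructor
  · intro h
    have : (n : ZMod l).val = (i : ℕ) := congrArg Fin.val h
    rw [← this, ZMod.natCast_val, ZMod.cast_id]
  · intro h
    apply Fin.ext
    simp only [res, h, ZMod.val_natCast_of_lt i.2]

include hζ in
lemma char_sum (i : Fin l) (n : ℤ) :
    ∑ j ∈ Finset.range l, ζ ^ ((i : ℕ) * j) * (ζ⁻¹ ^ n) ^ j
      = if res l n = i then (l : ℂ) else 0 := by
  have hξ : ∀ j : ℕ, ζ ^ ((i : ℕ) * j) * (ζ⁻¹ ^ n) ^ j = (ζ ^ (((i : ℕ) : ℤ) - n)) ^ j := by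
    intro j
    have hz : ζ ≠ 0 := hζ.ne_zero (NeZero.ne l)
    rw [pow_mul, ← mul_pow]
    congr 1
    rw [inv_zpow, ← zpow_neg, ← zpow_natCast ζ (i : ℕ), ← zpow_add₀ hz, sub_eq_add_neg]
  simp only [hξ]
  set ξ := ζ ^ (((i : ℕ) : ℤ) - n) with hξdef
  have hξl : ξ ^ l = 1 := by
    rw [hξdef, ← zpow_natCast, ← zpow_mul, mul_comm, zpow_mul, zpow_natCast,
      hζ.pow_eq_one, one_zpow]
  have hone : ξ = 1 ↔ res l n = i := by
    rw [hξdef, hζ.zpow_eq_one_iff_dvd, res_eq_iff, eq_comm, ← sub_eq_zero]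
    have : ((((i : ℕ) : ℤ) - n : ℤ) : ZMod l) = ((i : ℕ) : ZMod l) - (n : ZMod l) := by
      push_cast; ring
    rw [← this, ZMod.intCast_zmod_eq_zero_iff_dvd]
  by_cases h : res l n = i
  · rw [if_pos h]
    rw [← hone] at h
    simp [h]
  · rw [if_neg h]
    have h1 : ξ ≠ 1 := fun hh => h (hone.mp hh)
    rw [geom_sum_eq h1, hξl]
    simp

include hζ in
lemma eIdem_T (i : Fin l) (n : ℤ) :
    eIdem l ζ i (T n) = if res l n = i then (T n : Lau) else 0 := by
  have hl : (l : ℂ) ≠ 0 := Nat.cast_ne_zero.mpr (NeZero.ne l)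
  rw [eIdem]
  simp only [LinearMap.smul_apply, LinearMap.sum_apply, Gam_pow_T, smul_smul]
  rw [← Finset.sum_smul, char_sum hζ i n]
  by_cases h : res l n = i
  · rw [if_pos h, if_pos h, smul_smul, inv_mul_cancel₀ hl, one_smul]
  · rw [if_neg h, if_neg h, zero_smul, smul_zero]

def nu (l : ℕ) [NeZero l] (κ : Fin l → ℂ) (n : ℤ) : ℂ := n + l * κ (res l n)

include hζ in
lemma Dunkl_T (κ : Fin l → ℂ) (n : ℤ) :
    Dunkl l ζ κ (T n) = nu l κ n • T (n - 1) := by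
  rw [Dunkl]
  simp only [LinearMap.add_apply, LinearMap.smul_apply, Module.End.mul_apply,
    LinearMap.sum_apply, eIdem_T hζ, Deriv_T]
  rw [Finset.sum_congr rfl (fun i _ => by rw [smul_ite, smul_zero])]
  rw [Finset.sum_ite_eq (Finset.univ : Finset (Fin l)) (res l n) (fun i => κ i • (T n : Lau))]
  simp only [Finset.mem_univ, if_pos]
  rw [map_smul, Zinv_T, nu, add_smul, smul_smul]

include hζ in
lemma Dunkl_pow_T (κ : Fin l → ℂ) (c : ℕ) (n : ℤ) :
    ((Dunkl l ζ κ) ^ c) (T n) = (∏ k ∈ Finset.range c, nu l κ (n - k)) • T (n - c) := by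
  induction c generalizing n with
  | zero => simp
  | succ c ih =>
    rw [pow_succ, Module.End.mul_apply, Dunkl_T hζ, map_smul, ih, smul_smul,
      Finset.prod_range_succ', mul_comm]
    have h1 : ∀ k ∈ Finset.range c, nu l κ (n - 1 - k) = nu l κ (n - (k+1 : ℕ)) := by
      intro k _; congr 1; push_cast; ring
    rw [Finset.prod_congr rfl h1]
    congr 2
    · simp
    · push_cast; ring

lemma res_succ (n : ℤ) : res l (n + 1) = res l n + 1 := by
  apply Fin.ext
  have h1 : ((n + 1 : ℤ) : ZMod l) = (n : ZMod l) + 1 := by push_cast; ring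
  show ((n + 1 : ℤ) : ZMod l).val = _
  rw [h1, ZMod.val_add, ZMod.val_one_eq_one_mod]
  rw [Fin.add_def]
  congr 1

include hζ in
lemma rel1 : Gam ζ * Zmul = ζ⁻¹ • (Zmul * Gam ζ) := by
  have hz : ζ ≠ 0 := hζ.ne_zero (NeZero.ne l)
  have hz' : ζ⁻¹ ≠ 0 := inv_ne_zero hz
  apply endExt
  intro n
  rw [Module.End.mul_apply, LinearMap.smul_apply, Module.End.mul_apply, Zmul_T, Gam_T, Gam_T,
    map_smul, Zmul_T, smul_smul]
  congr 1
  rw [zpow_add_one₀ hz']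
  ring

omit [NeZero l] in
include hζ in
lemma rel2 : (Gam ζ) ^ l = 1 := by
  apply endExt
  intro n
  rw [Gam_pow_T, Module.End.one_apply]
  have : ((ζ⁻¹ ^ n) ^ l : ℂ) = (ζ⁻¹ ^ (l : ℕ)) ^ n := by
    rw [← zpow_natCast (ζ⁻¹ ^ n), ← zpow_mul, mul_comm, zpow_mul, zpow_natCast]
  rw [this, inv_pow, hζ.pow_eq_one, inv_one, one_zpow, one_smul]

include hζ in
lemma rel3 (κ : Fin l → ℂ) : Dunkl l ζ κ * Gam ζ = ζ⁻¹ • (Gam ζ * Dunkl l ζ κ) := by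
  have hz : ζ ≠ 0 := hζ.ne_zero (NeZero.ne l)
  have hz' : ζ⁻¹ ≠ 0 := inv_ne_zero hz
  apply endExt
  intro n
  rw [Module.End.mul_apply, LinearMap.smul_apply, Module.End.mul_apply, Gam_T, map_smul,
    Dunkl_T hζ, map_smul, Gam_T, smul_smul, smul_smul, smul_smul]
  congr 1
  have key : ζ⁻¹ ^ n = ζ⁻¹ ^ (n - 1) * ζ⁻¹ := by
    rw [← zpow_add_one₀ hz']
    congr 1
    ring
  rw [key]
  ring

include hζ in
lemma rel4 (κ : Fin l → ℂ) :
    Dunkl l ζ κ * Zmul = Zmul * Dunkl l ζ κ + 1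
      + ∑ i : Fin l, ((l : ℂ) * (κ (i + 1) - κ i)) • eIdem l ζ i := by
  apply endExt
  intro n
  rw [Module.End.mul_apply, LinearMap.add_apply, LinearMap.add_apply, Module.End.mul_apply,
    LinearMap.sum_apply, Zmul_T, Dunkl_T hζ, Dunkl_T hζ, map_smul, Zmul_T,
    Module.End.one_apply]
  have hsum : ∑ i : Fin l, (((l : ℂ) * (κ (i + 1) - κ i)) • eIdem l ζ i) (T n)
      = ((l : ℂ) * (κ (res l n + 1) - κ (res l n))) • T n := by
    rw [Finset.sum_congr rfl (fun i _ => by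
      rw [LinearMap.smul_apply, eIdem_T hζ, smul_ite, smul_zero])]
    rw [Finset.sum_ite_eq (Finset.univ : Finset (Fin l)) (res l n)
      (fun i => ((l : ℂ) * (κ (i + 1) - κ i)) • (T n : Lau))]
    simp only [Finset.mem_univ, if_pos]
  rw [hsum]
  have hn1 : n - 1 + 1 = n := by ring
  have hn2 : n + 1 - 1 = n := by ring
  rw [hn1, hn2]
  have key : nu l κ (n + 1) = nu l κ n + 1 + (l : ℂ) * (κ (res l n + 1) - κ (res l n)) := by
    rw [nu, nu, res_succ]
    push_cast
    ring
  rw [key, add_smul, add_smul, one_smul]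

include hζ in
lemma gam_mul_zpow (a : ℕ) : Gam ζ * Zmul ^ a = (ζ⁻¹ ^ a) • (Zmul ^ a * Gam ζ) := by
  induction a with
  | zero => simp
  | succ a ih =>
    rw [pow_succ', ← mul_assoc, rel1 hζ, smul_mul_assoc, mul_assoc, ih]
    rw [mul_smul_comm, smul_smul, pow_succ', mul_assoc]

include hζ in
lemma dunkl_mul_gampow (κ : Fin l → ℂ) (b : ℕ) :
    Dunkl l ζ κ * (Gam ζ) ^ b = (ζ⁻¹ ^ b) • ((Gam ζ) ^ b * Dunkl l ζ κ) := by
  induction b with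
  | zero => simp
  | succ b ih =>
    rw [pow_succ', ← mul_assoc, rel3 hζ, smul_mul_assoc, mul_assoc, ih]
    rw [mul_smul_comm, smul_smul, pow_succ', mul_assoc]

include hζ in
lemma gam_pow_mod (m : ℕ) : (Gam ζ) ^ m = (Gam ζ) ^ (m % l) := by
  conv_lhs => rw [← Nat.div_add_mod m l]
  rw [pow_add, pow_mul, rel2 hζ, one_pow, one_mul]

def Bop (l : ℕ) (ζ : ℂ) (κ : Fin l → ℂ) : ℕ × Fin l × ℕ → Module.End ℂ Lau :=
  fun p => Zmul ^ p.1 * (Gam ζ) ^ (p.2.1 : ℕ) * (Dunkl l ζ κ) ^ p.2.2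

def Mspan (l : ℕ) (ζ : ℂ) (κ : Fin l → ℂ) : Submodule ℂ (Module.End ℂ Lau) :=
  Submodule.span ℂ (Set.range (Bop l ζ κ))

variable (κ : Fin l → ℂ)

include hζ in
lemma memM_ZGD (a m c : ℕ) : Zmul ^ a * (Gam ζ) ^ m * (Dunkl l ζ κ) ^ c ∈ Mspan l ζ κ := by
  have hml : m % l < l := Nat.mod_lt _ (Nat.pos_of_ne_zero (NeZero.ne l))
  rw [gam_pow_mod hζ]
  exact Submodule.subset_span ⟨(a, ⟨m % l, hml⟩, c), rfl⟩

lemma leftMulMem {A : Module.End ℂ Lau} (h : ∀ p, A * Bop l ζ κ p ∈ Mspan l ζ κ) :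
    ∀ x ∈ Mspan l ζ κ, A * x ∈ Mspan l ζ κ := by
  intro x hx
  have hle : (Submodule.span ℂ (Set.range (Bop l ζ κ))).map (LinearMap.mulLeft ℂ A)
      ≤ Mspan l ζ κ := by
    rw [Submodule.map_span_le]
    rintro y ⟨p, rfl⟩
    exact h p
  exact hle ⟨x, hx, rfl⟩

include hζ in
lemma ZmulM : ∀ x ∈ Mspan l ζ κ, Zmul * x ∈ Mspan l ζ κ := by
  apply leftMulMem
  rintro ⟨a, b, c⟩
  rw [Bop, ← mul_assoc, ← mul_assoc, ← pow_succ']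
  exact memM_ZGD hζ κ _ _ _

include hζ in
lemma GamM : ∀ x ∈ Mspan l ζ κ, Gam ζ * x ∈ Mspan l ζ κ := by
  apply leftMulMem
  rintro ⟨a, b, c⟩
  rw [Bop, ← mul_assoc, ← mul_assoc, gam_mul_zpow hζ, smul_mul_assoc, smul_mul_assoc]
  apply Submodule.smul_mem
  rw [mul_assoc (Zmul ^ a), ← pow_succ']
  exact memM_ZGD hζ κ _ _ _

include hζ in
lemma GamPowM (j : ℕ) : ∀ x ∈ Mspan l ζ κ, (Gam ζ) ^ j * x ∈ Mspan l ζ κ := by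
  induction j with
  | zero => intro x hx; rw [pow_zero, one_mul]; exact hx
  | succ j ih =>
    intro x hx
    rw [pow_succ', mul_assoc]
    exact GamM hζ κ _ (ih x hx)

include hζ in
lemma eIdemM (i : Fin l) : ∀ x ∈ Mspan l ζ κ, eIdem l ζ i * x ∈ Mspan l ζ κ := by
  intro x hx
  rw [eIdem, smul_mul_assoc, Finset.sum_mul]
  apply Submodule.smul_mem
  apply Submodule.sum_mem
  intro j _
  rw [smul_mul_assoc]
  exact Submodule.smul_mem _ _ (GamPowM hζ κ j x hx)

include hζ in
lemma Dunkl_Bop (p : ℕ × Fin l × ℕ) : Dunkl l ζ κ * Bop l ζ κ p ∈ Mspan l ζ κ := by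
  obtain ⟨a, b, c⟩ := p
  induction a with
  | zero =>
    rw [Bop, pow_zero, one_mul, ← mul_assoc, dunkl_mul_gampow hζ, smul_mul_assoc]
    apply Submodule.smul_mem
    rw [mul_assoc, ← pow_succ']
    have h0 := memM_ZGD hζ κ 0 ((b : ℕ)) (c + 1)
    rwa [pow_zero, one_mul] at h0
  | succ a ih =>
    have hstep : Bop l ζ κ (a + 1, b, c) = Zmul * Bop l ζ κ (a, b, c) := by
      rw [Bop, Bop, ← mul_assoc, ← mul_assoc, ← pow_succ']
    rw [hstep, ← mul_assoc, rel4 hζ, add_mul, add_mul, one_mul, mul_assoc]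
    have hBop : Bop l ζ κ (a, b, c) ∈ Mspan l ζ κ := by
      exact Submodule.subset_span ⟨(a, b, c), rfl⟩
    apply Submodule.add_mem
    apply Submodule.add_mem
    · exact ZmulM hζ κ _ ih
    · exact hBop
    · rw [Finset.sum_mul]
      apply Submodule.sum_mem
      intro i _
      rw [smul_mul_assoc]
      exact Submodule.smul_mem _ _ (eIdemM hζ κ i _ hBop)

include hζ in
lemma DunklM : ∀ x ∈ Mspan l ζ κ, Dunkl l ζ κ * x ∈ Mspan l ζ κ :=
  leftMulMem κ (Dunkl_Bop hζ κ)

include hζ in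
lemma oneM : (1 : Module.End ℂ Lau) ∈ Mspan l ζ κ := by
  have := memM_ZGD hζ κ 0 0 0
  simpa using this

include hζ in
lemma cher_le_M : Subalgebra.toSubmodule (Cher l ζ κ) ≤ Mspan l ζ κ := by
  intro x hx
  have hx' : x ∈ Algebra.adjoin ℂ {Zmul, Gam ζ, Dunkl l ζ κ} := hx
  have key : ∀ m ∈ Mspan l ζ κ, x * m ∈ Mspan l ζ κ := by
    refine Algebra.adjoin_induction
      (p := fun y _ => ∀ m ∈ Mspan l ζ κ, y * m ∈ Mspan l ζ κ)
      (fun y hy => ?_) (fun r => ?_)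
      (fun y z hy' hz' hy hz => ?_) (fun y z hy' hz' hy hz => ?_) hx'
    · rcases hy with rfl | rfl | rfl
      · exact ZmulM hζ κ
      · exact GamM hζ κ
      · exact DunklM hζ κ
    · intro m hm
      rw [Algebra.algebraMap_eq_smul_one, smul_mul_assoc, one_mul]
      exact Submodule.smul_mem _ _ hm
    · intro m hm
      rw [add_mul]
      exact Submodule.add_mem _ (hy m hm) (hz m hm)
    · intro m hm
      rw [mul_assoc]
      exact hy _ (hz m hm)
  have := key 1 (oneM hζ κ)
  rwa [mul_one] at this

lemma M_le_cher : Mspan l ζ κ ≤ Subalgebra.toSubmodule (Cher l ζ κ) := by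
  rw [Mspan, Submodule.span_le]
  rintro y ⟨⟨a, b, c⟩, rfl⟩
  simp only [SetLike.mem_coe, Subalgebra.mem_toSubmodule]
  have hZ : Zmul ∈ Cher l ζ κ := Algebra.subset_adjoin (by simp)
  have hG : Gam ζ ∈ Cher l ζ κ := Algebra.subset_adjoin (by simp)
  have hD : Dunkl l ζ κ ∈ Cher l ζ κ := Algebra.subset_adjoin (by simp)
  exact mul_mem (mul_mem (pow_mem hZ a) (pow_mem hG (b : ℕ))) (pow_mem hD c)

include hζ in
lemma span_eq_cher : Mspan l ζ κ = Subalgebra.toSubmodule (Cher l ζ κ) :=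
  le_antisymm (M_le_cher κ) (cher_le_M hζ κ)

end

section LI

/-! ### Linear independence -/

open Polynomial in
lemma poly_zero_of_nat_eval (P : Polynomial ℂ) (h : ∀ N : ℕ, P.eval (N : ℂ) = 0) : P = 0 := by
  apply Polynomial.eq_zero_of_infinite_isRoot
  apply Set.infinite_of_injective_forall_mem (f := fun N : ℕ => (N : ℂ))
    (hi := Nat.cast_injective)
  exact fun N => h N

open Polynomial in
def Qpol (l : ℕ) [NeZero l] (κ : Fin l → ℂ) (r : ℤ) (c : ℕ) : Polynomial ℂ :=
  ∏ k ∈ Finset.range c, (Polynomial.C (l : ℂ) * Polynomial.X + Polynomial.C (nu l κ (r - k)))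

def coefB (l : ℕ) [NeZero l] (ζ : ℂ) (κ : Fin l → ℂ) (p : ℕ × Fin l × ℕ) (n : ℤ) : ℂ :=
  ((ζ⁻¹ ^ (n - p.2.2)) ^ ((p.2.1 : ℕ))) * ∏ k ∈ Finset.range p.2.2, nu l κ (n - k)

end LI

section
variable {l : ℕ} [NeZero l] {ζ : ℂ} (hζ : IsPrimitiveRoot ζ l) (κ : Fin l → ℂ)

lemma Qpol_fac_ne (v : ℂ) : (Polynomial.C (l : ℂ) * Polynomial.X + Polynomial.C v) ≠ 0 := by
  have hl0 : (l : ℂ) ≠ 0 := Nat.cast_ne_zero.mpr (NeZero.ne l)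
  apply Polynomial.ne_zero_of_natDegree_gt (n := 0)
  rw [Polynomial.natDegree_linear hl0]
  norm_num

open Polynomial in
lemma Qpol_natDegree (r : ℤ) (c : ℕ) : (Qpol l κ r c).natDegree = c := by
  have hl0 : (l : ℂ) ≠ 0 := Nat.cast_ne_zero.mpr (NeZero.ne l)
  rw [Qpol, Polynomial.natDegree_prod _ _ (fun k _ => Qpol_fac_ne _)]
  rw [Finset.sum_congr rfl (fun k _ => Polynomial.natDegree_linear hl0)]
  simp

open Polynomial in
lemma Qpol_coeff_self (r : ℤ) (c : ℕ) : (Qpol l κ r c).coeff c = (l : ℂ) ^ c := by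
  have hl0 : (l : ℂ) ≠ 0 := Nat.cast_ne_zero.mpr (NeZero.ne l)
  have h := Polynomial.coeff_natDegree (p := Qpol l κ r c)
  rw [Qpol_natDegree κ r c] at h
  rw [h, Qpol, Polynomial.leadingCoeff_prod]
  rw [Finset.prod_congr rfl (fun k _ => Polynomial.leadingCoeff_linear hl0)]
  simp

open Polynomial in
lemma Qpol_coeff_lt {c' c : ℕ} (r : ℤ) (h : c' < c) : (Qpol l κ r c').coeff c = 0 := by
  apply Polynomial.coeff_eq_zero_of_natDegree_lt
  rw [Qpol_natDegree]
  exact h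

open Polynomial in
lemma Qpol_eval (r : ℤ) (c : ℕ) (x : ℂ) :
    (Qpol l κ r c).eval x = ∏ k ∈ Finset.range c, ((l : ℂ) * x + nu l κ (r - k)) := by
  rw [Qpol, Polynomial.eval_prod]
  simp

lemma nu_shift (N : ℕ) (x : ℤ) : nu l κ ((l : ℤ) * N + x) = (l : ℂ) * N + nu l κ x := by
  have hres : res l ((l : ℤ) * N + x) = res l x := by
    apply Fin.ext
    show (((l : ℤ) * N + x : ℤ) : ZMod l).val = ((x : ZMod l)).val
    congr 1
    push_cast
    simp
  rw [nu, nu, hres]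
  push_cast
  ring

include hζ in
lemma zpow_shift (N : ℕ) (x : ℤ) : ζ⁻¹ ^ ((l : ℤ) * N + x) = ζ⁻¹ ^ x := by
  have hz : ζ ≠ 0 := hζ.ne_zero (NeZero.ne l)
  have hz' : ζ⁻¹ ≠ 0 := inv_ne_zero hz
  rw [zpow_add₀ hz', zpow_mul, zpow_natCast, zpow_natCast, inv_pow, hζ.pow_eq_one, inv_one,
    one_pow, one_mul]

include hζ in
lemma Bop_T (p : ℕ × Fin l × ℕ) (n : ℤ) :
    Bop l ζ κ p (T n) = coefB l ζ κ p n • T (n + p.1 - p.2.2) := by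
  obtain ⟨a, b, c⟩ := p
  rw [Bop, Module.End.mul_apply, Module.End.mul_apply, Dunkl_pow_T hζ, map_smul, Gam_pow_T,
    map_smul, map_smul, Zmul_pow_T, smul_smul, coefB]
  have hexp : n - c + a = n + a - c := by ring
  rw [hexp, mul_comm]

include hζ in
lemma coefB_shift (p : ℕ × Fin l × ℕ) (N : ℕ) (r : ℤ) :
    coefB l ζ κ p ((l : ℤ) * N + r)
      = ((ζ⁻¹ ^ (r - p.2.2)) ^ ((p.2.1 : ℕ))) * (Qpol l κ r p.2.2).eval (N : ℂ) := by
  rw [coefB, Qpol_eval]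
  congr 1
  · have : (l : ℤ) * N + r - p.2.2 = (l : ℤ) * N + (r - p.2.2) := by ring
    rw [this, zpow_shift hζ]
  · apply Finset.prod_congr rfl
    intro k _
    have : (l : ℤ) * N + r - k = (l : ℤ) * N + (r - k) := by ring
    rw [this, nu_shift]

include hζ in
lemma li_Bop : LinearIndependent ℂ (Bop l ζ κ) := by
  have hz : ζ ≠ 0 := hζ.ne_zero (NeZero.ne l)
  rw [linearIndependent_iff]
  intro g hg
  have h1 : ∀ n : ℤ,
      ∑ p ∈ g.support, (g p * coefB l ζ κ p n) • T (n + p.1 - p.2.2) = (0 : Lau) := by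
    intro n
    have h0 := LinearMap.congr_fun hg (T n)
    rw [Finsupp.linearCombination_apply, Finsupp.sum] at h0
    simp only [LinearMap.coe_sum, Finset.sum_apply, LinearMap.smul_apply,
      LinearMap.zero_apply] at h0
    calc ∑ p ∈ g.support, (g p * coefB l ζ κ p n) • T (n + p.1 - p.2.2)
        = ∑ p ∈ g.support, g p • (Bop l ζ κ p) (T n) :=
          Finset.sum_congr rfl (fun p _ => by rw [Bop_T hζ κ, smul_smul])
      _ = 0 := h0
  have h2 : ∀ (δ : ℤ) (n : ℤ),
      ∑ p ∈ g.support.filter (fun p => (p.1 : ℤ) - p.2.2 = δ),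
        g p * coefB l ζ κ p n = 0 := by
    intro δ n
    have h0 := congrArg (fun x : Lau => x.coeff (n + δ)) (h1 n)
    rw [AddMonoidAlgebra.coeff_sum, Finsupp.finset_sum_apply] at h0
    refine Eq.trans ?_ h0
    rw [Finset.sum_filter]
    apply Finset.sum_congr rfl
    intro p hp
    rw [AddMonoidAlgebra.coeff_smul_apply, T_apply, smul_eq_mul]
    by_cases hd : (p.1 : ℤ) - p.2.2 = δ
    · rw [if_pos hd, if_pos (show n + (p.1 : ℤ) - p.2.2 = n + δ by omega), mul_one]
    · rw [if_neg hd, if_neg (show ¬(n + (p.1 : ℤ) - p.2.2 = n + δ) by omega), mul_zero]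
  ext p₀
  show g p₀ = 0
  by_cases hp₀ : p₀ ∈ g.support
  swap
  · exact Finsupp.notMem_support_iff.mp hp₀
  set δ : ℤ := (p₀.1 : ℤ) - p₀.2.2 with hδdef
  set S : Finset (ℕ × Fin l × ℕ) := g.support.filter (fun p => (p.1 : ℤ) - p.2.2 = δ)
    with hSdef
  have hp₀S : p₀ ∈ S := Finset.mem_filter.mpr ⟨hp₀, rfl⟩
  have hP : ∀ r : ℤ,
      (∑ p ∈ S, Polynomial.C (g p * ((ζ⁻¹ ^ (r - p.2.2)) ^ ((p.2.1 : ℕ))))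
        * Qpol l κ r p.2.2) = 0 := by
    intro r
    apply poly_zero_of_nat_eval
    intro N
    rw [Polynomial.eval_finset_sum]
    simp only [Polynomial.eval_mul, Polynomial.eval_C]
    refine Eq.trans ?_ (h2 δ ((l : ℤ) * N + r))
    apply Finset.sum_congr rfl
    intro p hp
    rw [coefB_shift hζ κ p N r, mul_assoc]
  have key : ∀ c : ℕ, (∀ q ∈ S, c < q.2.2 → g q = 0) → ∀ q ∈ S, q.2.2 = c → g q = 0 := by
    intro c hgt q hqS hqc
    have hδq : (q.1 : ℤ) - q.2.2 = δ := (Finset.mem_filter.mp hqS).2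
    set e : Fin l → ℕ × Fin l × ℕ := fun b => (q.1, b, c) with he
    have hrow : ∀ r : ℕ,
        ∑ b : Fin l, g (e b) * ((ζ⁻¹ ^ ((r : ℤ) - c)) ^ ((b : ℕ))) = 0 := by
      intro r
      have h3 := congrArg (fun P => Polynomial.coeff P c) (hP (r : ℤ))
      simp only [Polynomial.finset_sum_coeff, Polynomial.coeff_C_mul,
        Polynomial.coeff_zero] at h3
      have h4 : ∑ p ∈ S.filter (fun p => p.2.2 = c),
          (g p * ((ζ⁻¹ ^ ((r : ℤ) - p.2.2)) ^ ((p.2.1 : ℕ)))) * (l : ℂ) ^ c = 0 := by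
        refine Eq.trans ?_ h3
        rw [Finset.sum_filter]
        apply Finset.sum_congr rfl
        intro p hpS
        rcases lt_trichotomy p.2.2 c with hlt | heq | hgt'
        · rw [if_neg (by omega), Qpol_coeff_lt κ (r : ℤ) hlt, mul_zero]
        · rw [if_pos heq, heq, Qpol_coeff_self]
        · rw [if_neg (by omega), hgt p hpS hgt', zero_mul, zero_mul]
      rw [← Finset.sum_mul] at h4
      have hl0 : ((l : ℂ)) ^ c ≠ 0 := pow_ne_zero _ (Nat.cast_ne_zero.mpr (NeZero.ne l))
      have h5 := (mul_eq_zero.mp h4).resolve_right hl0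
      have hsub : S.filter (fun p => p.2.2 = c) ⊆ Finset.image e Finset.univ := by
        intro p hp
        obtain ⟨hpS, hpc⟩ := Finset.mem_filter.mp hp
        have hpδ : (p.1 : ℤ) - p.2.2 = δ := (Finset.mem_filter.mp hpS).2
        have hpq : (p.1 : ℤ) - p.2.2 = (q.1 : ℤ) - q.2.2 := by rw [hpδ, hδq]
        have hpa : p.1 = q.1 := by omega
        refine Finset.mem_image.mpr ⟨p.2.1, Finset.mem_univ _, ?_⟩
        rw [he]
        obtain ⟨a', b', c'⟩ := p
        simp only at hpa hpc ⊢
        rw [hpa, hpc]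
      have hvan : ∀ p ∈ Finset.image e Finset.univ, p ∉ S.filter (fun p => p.2.2 = c) →
          g p * ((ζ⁻¹ ^ ((r : ℤ) - p.2.2)) ^ ((p.2.1 : ℕ))) = 0 := by
        intro p hpimg hpnot
        obtain ⟨b, _, rfl⟩ := Finset.mem_image.mp hpimg
        have hgp : g (e b) = 0 := by
          by_contra hne
          apply hpnot
          apply Finset.mem_filter.mpr
          refine ⟨Finset.mem_filter.mpr ⟨Finsupp.mem_support_iff.mpr hne, ?_⟩, rfl⟩
          show ((q.1 : ℤ) - (c : ℤ) = δ)
          omega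
        rw [hgp, zero_mul]
      have hinj : ∀ b ∈ (Finset.univ : Finset (Fin l)), ∀ b' ∈ Finset.univ,
          e b = e b' → b = b' := fun b _ b' _ hbb => by
        simpa [he, Prod.ext_iff] using hbb
      calc ∑ b : Fin l, g (e b) * ((ζ⁻¹ ^ ((r : ℤ) - (c : ℕ))) ^ ((b : ℕ)))
          = ∑ b ∈ (Finset.univ : Finset (Fin l)),
              (fun p : ℕ × Fin l × ℕ =>
                g p * ((ζ⁻¹ ^ ((r : ℤ) - p.2.2)) ^ ((p.2.1 : ℕ)))) (e b) := by
            apply Finset.sum_congr rfl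
            intro b _
            rw [he]
        _ = ∑ p ∈ Finset.image e Finset.univ,
              g p * ((ζ⁻¹ ^ ((r : ℤ) - p.2.2)) ^ ((p.2.1 : ℕ))) :=
            (Finset.sum_image (f := fun p : ℕ × Fin l × ℕ =>
              g p * ((ζ⁻¹ ^ ((r : ℤ) - p.2.2)) ^ ((p.2.1 : ℕ)))) hinj).symm
        _ = ∑ p ∈ S.filter (fun p => p.2.2 = c),
              g p * ((ζ⁻¹ ^ ((r : ℤ) - p.2.2)) ^ ((p.2.1 : ℕ))) :=
            (Finset.sum_subset hsub hvan).symm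
        _ = 0 := h5
    set μ : Fin l → ℂ := fun b => g (e b) * ((ζ ^ (c : ℤ)) ^ ((b : ℕ))) with hμdef
    have hsplit : ∀ (r : ℕ) (b : Fin l),
        (ζ⁻¹ ^ ((r : ℤ) - c)) ^ ((b : ℕ))
          = (ζ⁻¹ ^ (r : ℕ)) ^ ((b : ℕ)) * ((ζ ^ (c : ℤ)) ^ ((b : ℕ))) := by
      intro r b
      rw [← mul_pow]
      congr 1
      calc ζ⁻¹ ^ ((r : ℤ) - (c : ℕ))
          = ζ⁻¹ ^ (r : ℤ) * (ζ⁻¹ ^ ((c : ℕ) : ℤ))⁻¹ := by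
            rw [zpow_sub₀ (inv_ne_zero hz), div_eq_mul_inv]
        _ = ζ⁻¹ ^ (r : ℕ) * ζ ^ ((c : ℕ) : ℤ) := by
            rw [zpow_natCast, inv_zpow, inv_inv]
    have hpoly : ∀ r : ℕ,
        Polynomial.eval ((ζ⁻¹) ^ r)
          (∑ b : Fin l, Polynomial.C (μ b) * Polynomial.X ^ ((b : ℕ))) = 0 := by
      intro r
      rw [Polynomial.eval_finset_sum]
      simp only [Polynomial.eval_mul, Polynomial.eval_C, Polynomial.eval_pow,
        Polynomial.eval_X]
      rw [← hrow r]
      apply Finset.sum_congr rfl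
      intro b _
      rw [hsplit r b, hμdef]
      ring
    have hq0 : (∑ b : Fin l, Polynomial.C (μ b) * Polynomial.X ^ ((b : ℕ))) = 0 := by
      apply Polynomial.eq_zero_of_natDegree_lt_card_of_eval_eq_zero _
        (f := fun r : Fin l => (ζ⁻¹) ^ (r : ℕ))
        (fun r s hrs => Fin.ext (hζ.inv.pow_inj r.2 s.2 hrs))
        (fun r => hpoly (r : ℕ))
      rw [Fintype.card_fin]
      have hbound : (∑ b : Fin l, Polynomial.C (μ b) * Polynomial.X ^ ((b : ℕ))).natDegree
          ≤ l - 1 := by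
        apply Polynomial.natDegree_sum_le_of_forall_le
        intro b _
        apply le_trans (Polynomial.natDegree_C_mul_le _ _)
        rw [Polynomial.natDegree_X_pow]
        have := b.2
        omega
      have := NeZero.ne l
      omega
    have hμ0 : μ q.2.1 = 0 := by
      have h6 := congrArg (fun P => Polynomial.coeff P ((q.2.1 : ℕ))) hq0
      simp only [Polynomial.finset_sum_coeff, Polynomial.coeff_C_mul,
        Polynomial.coeff_X_pow, Polynomial.coeff_zero, mul_ite, mul_one, mul_zero] at h6
      simp only [Fin.val_eq_val] at h6
      rw [Finset.sum_ite_eq Finset.univ q.2.1 μ] at h6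
      simpa using h6
    have hzc : ((ζ ^ (c : ℤ)) ^ ((q.2.1 : ℕ))) ≠ 0 := pow_ne_zero _ (zpow_ne_zero _ hz)
    simp only [hμdef] at hμ0
    have hge : g (e q.2.1) = 0 := (mul_eq_zero.mp hμ0).resolve_right hzc
    have heq : e q.2.1 = q := by
      rw [he]
      show (q.1, q.2.1, c) = q
      rw [← hqc]
    rwa [heq] at hge
  set Cmax := S.sup (fun p => p.2.2) with hCmax
  have Aall : ∀ d : ℕ, ∀ q ∈ S, Cmax - q.2.2 ≤ d → g q = 0 := by
    intro d
    induction d with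
    | zero =>
      intro q hq hle
      apply key q.2.2 _ q hq rfl
      intro q' hq' hlt
      have hb : q'.2.2 ≤ Cmax := Finset.le_sup (f := fun p : ℕ × Fin l × ℕ => p.2.2) hq'
      exact absurd hlt (by omega)
    | succ d ih =>
      intro q hq hle
      apply key q.2.2 _ q hq rfl
      intro q' hq' hlt
      refine ih q' hq' ?_
      have hb : q'.2.2 ≤ Cmax := Finset.le_sup (f := fun p : ℕ × Fin l × ℕ => p.2.2) hq'
      omega
  exact Aall Cmax p₀ hp₀S (by omega)

end

end PBWAux

/-- PBW / triangular decomposition of the rational Cherednik algebra of type `ℤ/lℤ`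
(Proposition 12(1)): `H_κ ≅ ℂ[z] ⊗ ℂ[ℤ/lℤ] ⊗ ℂ[∂_κ]` as ℂ-vector spaces.  The family
of operators `{Z^a ∘ Γ^b ∘ ∂_κ^c : a, c ∈ ℤ_{≥0}, 0 ≤ b ≤ l−1}` is a basis of `H_κ` as
a ℂ-vector space: it is ℂ-linearly independent in `End_ℂ(L)` and it spans `H_κ`. -/
theorem pbw_basis_cherednik (l : ℕ) [NeZero l] (ζ : ℂ)
    (hζ : ζ = Complex.exp (2 * Real.pi * Complex.I / l))
    (κ : Fin l → ℂ) (hκ0 : κ 0 = 0) :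
    LinearIndependent ℂ (fun p : ℕ × Fin l × ℕ =>
      Zmul ^ p.1 * (Gam ζ) ^ (p.2.1 : ℕ) * (Dunkl l ζ κ) ^ p.2.2) ∧
    Submodule.span ℂ (Set.range (fun p : ℕ × Fin l × ℕ =>
      Zmul ^ p.1 * (Gam ζ) ^ (p.2.1 : ℕ) * (Dunkl l ζ κ) ^ p.2.2)) =
      Subalgebra.toSubmodule (Cher l ζ κ) := by
  have hprim : IsPrimitiveRoot ζ l := by
    rw [hζ]
    exact Complex.isPrimitiveRoot_exp l (NeZero.ne l)
  exact ⟨PBWAux.li_Bop hprim κ, PBWAux.span_eq_cher hprim κ⟩
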